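/- Let k ≥ 1 be an integer, γ > 0, λ₁,…,λ_k > 0, K > 0, and let U : ℝ → ℝ be twice continuously differentiable with U″(x) ≥ −K for all x ∈ ℝ. Set h* = min{ 4/(K+1), min_{1≤ℓ≤k} 8/(γλ_ℓ²), 8/(2γ + 2(K+1) + γk) } and let h ∈ (0, h*). Then for every w ∈ ℝ^{k+2} there exists a unique y ∈ ℝ^{k+2} such that G(y, w, h) = 0; that is, the implicit AVF step is uniquely solvable. -/

import Mathlib

open scoped BigOperators
open Filter MeasureTheory intervalIntegral

/-- The defining map of the implicit AVF step for the quasi-Markovian GLE.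
Index `0` is the `v`-component, indices `1,…,k` (written `ℓ.succ.castSucc` for `ℓ : Fin k`)
are the `z`-components, and index `k+1` (`Fin.last (k+1)`) is the `x`-component. -/
noncomputable def G (k : ℕ) (γ : ℝ) (lam : Fin k → ℝ) (U : ℝ → ℝ) (h : ℝ)
    (y w : EuclideanSpace ℝ (Fin (k + 2))) : EuclideanSpace ℝ (Fin (k + 2)) :=
  (EuclideanSpace.equiv (Fin (k + 2)) ℝ).symm <| fun i =>
    Fin.cases
      (y 0 - w 0 + (γ * h / 4) * (y 0 + w 0)
        + h * (∫ θ in (0:ℝ)..1,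
            deriv U (w (Fin.last (k + 1)) + θ * (y (Fin.last (k + 1)) - w (Fin.last (k + 1)))))
        - (h / 2) * ∑ ℓ : Fin k, lam ℓ * (y ℓ.succ.castSucc + w ℓ.succ.castSucc))
      (fun j =>
        Fin.lastCases
          (y (Fin.last (k + 1)) - w (Fin.last (k + 1))
            - (γ * h / 4) * (y (Fin.last (k + 1)) + w (Fin.last (k + 1)))
            - (h / 2) * (y 0 + w 0))
          (fun ℓ =>
            y ℓ.succ.castSucc - w ℓ.succ.castSucc
              + (lam ℓ * h / 2) * (y 0 + w 0)
              + (γ * lam ℓ * h / 4) * (y (Fin.last (k + 1)) + w (Fin.last (k + 1))))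
          j)
      i

private lemma Gapp (k : ℕ) (γ : ℝ) (lam : Fin k → ℝ) (U : ℝ → ℝ) (h : ℝ)
    (y w : EuclideanSpace ℝ (Fin (k + 2))) (i : Fin (k + 2)) :
    G k γ lam U h y w i =
      Fin.cases
      (y 0 - w 0 + (γ * h / 4) * (y 0 + w 0)
        + h * (∫ θ in (0:ℝ)..1,
            deriv U (w (Fin.last (k + 1)) + θ * (y (Fin.last (k + 1)) - w (Fin.last (k + 1)))))
        - (h / 2) * ∑ ℓ : Fin k, lam ℓ * (y ℓ.succ.castSucc + w ℓ.succ.castSucc))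
      (fun j =>
        Fin.lastCases
          (y (Fin.last (k + 1)) - w (Fin.last (k + 1))
            - (γ * h / 4) * (y (Fin.last (k + 1)) + w (Fin.last (k + 1)))
            - (h / 2) * (y 0 + w 0))
          (fun ℓ =>
            y ℓ.succ.castSucc - w ℓ.succ.castSucc
              + (lam ℓ * h / 2) * (y 0 + w 0)
              + (γ * lam ℓ * h / 4) * (y (Fin.last (k + 1)) + w (Fin.last (k + 1))))
          j)
      i := rfl


private lemma Gapp_last (k : ℕ) (γ : ℝ) (lam : Fin k → ℝ) (U : ℝ → ℝ) (h : ℝ)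
    (y w : EuclideanSpace ℝ (Fin (k + 2))) :
    G k γ lam U h y w (Fin.last (k + 1)) =
      y (Fin.last (k + 1)) - w (Fin.last (k + 1))
        - (γ * h / 4) * (y (Fin.last (k + 1)) + w (Fin.last (k + 1)))
        - (h / 2) * (y 0 + w 0) := by
  rw [Gapp, ← Fin.succ_last, Fin.cases_succ, Fin.lastCases_last]

private lemma Gapp_z (k : ℕ) (γ : ℝ) (lam : Fin k → ℝ) (U : ℝ → ℝ) (h : ℝ)
    (y w : EuclideanSpace ℝ (Fin (k + 2))) (ℓ : Fin k) :
    G k γ lam U h y w ℓ.succ.castSucc =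
      y ℓ.succ.castSucc - w ℓ.succ.castSucc
        + (lam ℓ * h / 2) * (y 0 + w 0)
        + (γ * lam ℓ * h / 4) * (y (Fin.last (k + 1)) + w (Fin.last (k + 1))) := by
  rw [Gapp, ← Fin.succ_castSucc, Fin.cases_succ, Fin.lastCases_castSucc, Fin.succ_castSucc]

private lemma exists_unique_root (c : ℝ) (hc : 0 < c) (f : ℝ → ℝ) (hf : Continuous f)
    (hmono : ∀ a b : ℝ, b ≤ a → c * (a - b) ≤ f a - f b) : ∃! s, f s = 0 := by
  have hsm : StrictMono f := by
    intro a b hab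
    have h1 := hmono b a hab.le
    nlinarith
  have htop : Tendsto f atTop atTop := by
    apply tendsto_atTop_mono' atTop
      ((eventually_ge_atTop (0:ℝ)).mono fun s hs => ?_)
      (tendsto_atTop_add_const_right _ (f 0) (Tendsto.const_mul_atTop hc tendsto_id))
    have := hmono s 0 hs
    simp only [id]
    linarith
  have hbot : Tendsto f atBot atBot := by
    apply tendsto_atBot_mono' atBot
      ((eventually_le_atBot (0:ℝ)).mono fun s hs => ?_)
      (tendsto_atBot_add_const_right _ (f 0) (Tendsto.const_mul_atBot hc tendsto_id))
    have := hmono 0 s hs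
    simp only [id]
    linarith
  obtain ⟨s0, hs0⟩ := (hf.surjective htop hbot) 0
  exact ⟨s0, hs0, fun y hy => hsm.injective (hy.trans hs0.symm)⟩

set_option maxHeartbeats 1000000 in
/-- unique solvability of the implicit AVF step for `h ∈ (0, h*)`. -/
theorem stmt_4 (k : ℕ) (hk : 1 ≤ k) (γ : ℝ) (hγ : 0 < γ)
    (lam : Fin k → ℝ) (hlam : ∀ ℓ, 0 < lam ℓ) (K : ℝ) (hK : 0 < K)
    (U : ℝ → ℝ) (hU : ContDiff ℝ 2 U) (hU'' : ∀ x : ℝ, -K ≤ deriv (deriv U) x)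
    (h : ℝ) (hh0 : 0 < h)
    (hh : h < min (4 / (K + 1))
      (min ((Finset.univ : Finset (Fin k)).inf' ⟨⟨0, hk⟩, Finset.mem_univ _⟩
          (fun ℓ => 8 / (γ * lam ℓ ^ 2)))
        (8 / (2 * γ + 2 * (K + 1) + γ * (k : ℝ))))) :
    ∀ w : EuclideanSpace ℝ (Fin (k + 2)),
      ∃! y : EuclideanSpace ℝ (Fin (k + 2)), G k γ lam U h y w = 0 := by
  intro w
  classical
  set v : ℝ := w 0 with hv
  set x : ℝ := w (Fin.last (k + 1)) with hx
  -- step size bounds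
  have hk1 : (1:ℝ) ≤ (k:ℝ) := by exact_mod_cast hk
  have hden : (0:ℝ) < 2 * γ + 2 * (K + 1) + γ * (k : ℝ) := by nlinarith
  have h3 : h < 8 / (2 * γ + 2 * (K + 1) + γ * (k : ℝ)) :=
    lt_of_lt_of_le hh (le_trans (min_le_right _ _) (min_le_right _ _))
  have hD8 : h * (2 * γ + 2 * (K + 1) + γ * (k : ℝ)) < 8 := (lt_div_iff₀ hden).mp h3
  have hhgk : h * (γ + K + 1) < 4 := by nlinarith
  have hγh : γ * h / 4 < 1 := by nlinarith
  have hD : (0:ℝ) < 1 - γ * h / 4 := by linarith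
  -- the reduced scalar problem
  set X : ℝ → ℝ := fun s => ((1 + γ * h / 4) * x + (h / 2) * (s + v)) / (1 - γ * h / 4) with hX
  set μ : ℝ := (h / 2) / (1 - γ * h / 4) with hμ
  have hμ0 : 0 < μ := by rw [hμ]; positivity
  have hμD : μ * (1 - γ * h / 4) = h / 2 := div_mul_cancel₀ _ hD.ne'
  have hXmul : ∀ s : ℝ, X s * (1 - γ * h / 4) = (1 + γ * h / 4) * x + (h / 2) * (s + v) :=
    fun s => div_mul_cancel₀ _ hD.ne'
  have hXdiff : ∀ a b : ℝ, X a - X b = μ * (a - b) := by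
    intro a b
    apply mul_right_cancel₀ hD.ne'
    linear_combination hXmul a - hXmul b - (a - b) * hμD
  have hXc : Continuous X := by rw [hX]; fun_prop
  set Z : Fin k → ℝ → ℝ := fun ℓ s =>
    w ℓ.succ.castSucc - (lam ℓ * h / 2) * (s + v) - (γ * lam ℓ * h / 4) * (X s + x) with hZ
  set g : ℝ → ℝ := fun s => ∫ θ in (0:ℝ)..1, deriv U (x + θ * (X s - x)) with hg
  set φ : ℝ → ℝ := fun s => s - v + (γ * h / 4) * (s + v) + h * g s
      - (h / 2) * ∑ ℓ : Fin k, lam ℓ * (Z ℓ s + w ℓ.succ.castSucc) with hφ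
  -- regularity of U
  have hU' : Continuous (deriv U) := hU.continuous_deriv (by norm_num)
  have hdU : Differentiable ℝ (deriv U) := by
    have h2 : ContDiff ℝ ((1:ℕ) + 1) U := by exact_mod_cast hU
    exact ((contDiff_succ_iff_deriv.mp h2).2.2).differentiable (by simp)
  have hVmono : Monotone (fun t => deriv U t + K * t) := by
    apply monotone_of_deriv_nonneg
    · exact hdU.add (differentiable_id.const_mul K)
    · intro t
      have h1 : HasDerivAt (fun t => deriv U t + K * t) (deriv (deriv U) t + K) t := by
        have := ((hdU t).hasDerivAt).add ((hasDerivAt_id t).const_mul K)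
        simp only [mul_one] at this
        exact this
      rw [h1.deriv]
      linarith [hU'' t]
  have hUlip : ∀ p q : ℝ, q ≤ p → deriv U q - K * (p - q) ≤ deriv U p := by
    intro p q hqp
    have h2 : deriv U q + K * q ≤ deriv U p + K * p := hVmono hqp
    linarith
  -- continuity of the reduced map
  have hgc : Continuous g := by
    rw [hg]
    have hcu : Continuous (Function.uncurry fun (s θ : ℝ) => deriv U (x + θ * (X s - x))) :=
      hU'.comp (continuous_const.add (continuous_snd.mul
        ((hXc.comp continuous_fst).sub continuous_const)))
    exact continuous_parametric_intervalIntegral_of_continuous' hcu 0 1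
  have hφc : Continuous φ := by
    rw [hφ]
    have hsumc : Continuous fun s => ∑ ℓ : Fin k, lam ℓ * (Z ℓ s + w ℓ.succ.castSucc) := by
      apply continuous_finset_sum
      intro ℓ _
      simp only [hZ]
      fun_prop
    fun_prop
  -- the monotonicity constant
  set c : ℝ := 1 + γ * h / 4 - K * h * μ / 2 with hc'
  have hkey : K * h ^ 2 < 4 * (1 - γ * h / 4) * (1 + γ * h / 4) := by
    have h5 : (h * (γ + K + 1)) ^ 2 < 16 := by
      nlinarith [mul_pos hh0 (show (0:ℝ) < γ + K + 1 by linarith)]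
    nlinarith [mul_nonneg (sq_nonneg h) (by positivity : (0:ℝ) ≤ (K - 1) ^ 2 + 2 * γ * (K + 1))]
  have hc : 0 < c := by
    have h6 : c * (1 - γ * h / 4) = (1 + γ * h / 4) * (1 - γ * h / 4) - K * h ^ 2 / 4 := by
      rw [hc']
      linear_combination (-(K * h / 2)) * hμD
    have h7 : 0 < c * (1 - γ * h / 4) := by rw [h6]; nlinarith
    by_contra hcon
    push_neg at hcon
    nlinarith [mul_nonneg (neg_nonneg.mpr hcon) hD.le]
  -- integrability helper
  have hint : ∀ s : ℝ, IntervalIntegrable (fun θ => deriv U (x + θ * (X s - x))) volume 0 1 := by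
    intro s
    exact ((hU'.comp (by fun_prop : Continuous fun θ : ℝ => x + θ * (X s - x))).intervalIntegrable 0 1)
  -- strict monotonicity of φ
  have hmono : ∀ a b : ℝ, b ≤ a → c * (a - b) ≤ φ a - φ b := by
    intro a b hba
    have hXab : X a - X b = μ * (a - b) := hXdiff a b
    have hXba : 0 ≤ X a - X b := by
      rw [hXab]; exact mul_nonneg hμ0.le (by linarith)
    -- bound on the integral part
    have hglb : -(K * μ * (a - b)) * (1 / 2) ≤
        (∫ θ in (0:ℝ)..1, deriv U (x + θ * (X a - x)))
          - ∫ θ in (0:ℝ)..1, deriv U (x + θ * (X b - x)) := by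
      rw [← intervalIntegral.integral_sub (hint a) (hint b)]
      have hle : (∫ θ in (0:ℝ)..1, -(K * μ * (a - b)) * θ) ≤
          ∫ θ in (0:ℝ)..1,
            (deriv U (x + θ * (X a - x)) - deriv U (x + θ * (X b - x))) := by
        apply intervalIntegral.integral_mono_on (by norm_num)
          ((by fun_prop : Continuous fun θ : ℝ => -(K * μ * (a - b)) * θ).intervalIntegrable 0 1)
          ((hint a).sub (hint b))
        intro θ hθ
        obtain ⟨hθ0, hθ1⟩ := hθ
        have hpq : x + θ * (X b - x) ≤ x + θ * (X a - x) := by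
          have h8 : 0 ≤ θ * (X a - X b) := mul_nonneg hθ0 hXba
          linarith only [h8]
        have hlip := hUlip (x + θ * (X a - x)) (x + θ * (X b - x)) hpq
        have harg : (x + θ * (X a - x)) - (x + θ * (X b - x)) = θ * (μ * (a - b)) := by
          rw [show (x + θ * (X a - x)) - (x + θ * (X b - x)) = θ * (X a - X b) by ring, hXab]
        rw [harg] at hlip
        linarith
      have hval : (∫ θ in (0:ℝ)..1, -(K * μ * (a - b)) * θ) = -(K * μ * (a - b)) * (1 / 2) := by
        rw [intervalIntegral.integral_const_mul, integral_id]
        norm_num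
      linarith
    have hgab : g a - g b =
        (∫ θ in (0:ℝ)..1, deriv U (x + θ * (X a - x)))
          - ∫ θ in (0:ℝ)..1, deriv U (x + θ * (X b - x)) := rfl
    -- the z-sum moves in the right direction
    have hterm : ∀ ℓ : Fin k, 0 ≤ lam ℓ * (Z ℓ b - Z ℓ a) := by
      intro ℓ
      have hzz : Z ℓ b - Z ℓ a =
          (lam ℓ * h / 2) * (a - b) + (γ * lam ℓ * h / 4) * (X a - X b) := by
        simp only [hZ]; ring
      have h1 : 0 ≤ (lam ℓ * h / 2) * (a - b) :=
        mul_nonneg (div_nonneg (mul_nonneg (hlam ℓ).le hh0.le) (by norm_num))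
          (by linarith only [hba])
      have h2 : 0 ≤ (γ * lam ℓ * h / 4) * (X a - X b) :=
        mul_nonneg (div_nonneg (mul_nonneg (mul_nonneg hγ.le (hlam ℓ).le) hh0.le)
          (by norm_num)) hXba
      have h3 : 0 ≤ Z ℓ b - Z ℓ a := by rw [hzz]; linarith only [h1, h2]
      exact mul_nonneg (hlam ℓ).le h3
    have hsums : ∑ ℓ : Fin k, lam ℓ * (Z ℓ a + w ℓ.succ.castSucc) ≤
        ∑ ℓ : Fin k, lam ℓ * (Z ℓ b + w ℓ.succ.castSucc) := by
      apply Finset.sum_le_sum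
      intro ℓ _
      have h4 := hterm ℓ
      nlinarith [h4]
    have hceq : c * (a - b) = (1 + γ * h / 4) * (a - b) + h * (-(K * μ * (a - b)) * (1 / 2)) := by
      rw [hc']; ring
    have hgmul : h * (-(K * μ * (a - b)) * (1 / 2)) ≤ h * (g a - g b) := by
      rw [hgab]
      exact mul_le_mul_of_nonneg_left hglb hh0.le
    have hφd : φ a - φ b = (1 + γ * h / 4) * (a - b) + h * (g a - g b)
        + (h / 2) * (∑ ℓ : Fin k, lam ℓ * (Z ℓ b + w ℓ.succ.castSucc)
          - ∑ ℓ : Fin k, lam ℓ * (Z ℓ a + w ℓ.succ.castSucc)) := by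
      simp only [hφ]; ring
    have hsumnn : 0 ≤ (h / 2) * (∑ ℓ : Fin k, lam ℓ * (Z ℓ b + w ℓ.succ.castSucc)
          - ∑ ℓ : Fin k, lam ℓ * (Z ℓ a + w ℓ.succ.castSucc)) := by
      apply mul_nonneg (by linarith)
      linarith
    rw [hφd, hceq]
    linarith
  obtain ⟨s0, hs0, hsu⟩ := exists_unique_root c hc φ hφc hmono
  -- the candidate solution
  set Y : EuclideanSpace ℝ (Fin (k + 2)) :=
    (EuclideanSpace.equiv (Fin (k + 2)) ℝ).symm
      (fun i => Fin.cases s0 (fun j => Fin.lastCases (X s0) (fun ℓ => Z ℓ s0) j) i) with hYdef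
  have hY0 : Y 0 = s0 := rfl
  have hYlast : Y (Fin.last (k + 1)) = X s0 := by
    show (Fin.cases s0 (fun j => Fin.lastCases (X s0) (fun ℓ => Z ℓ s0) j)
      (Fin.last (k + 1)) : ℝ) = X s0
    rw [← Fin.succ_last, Fin.cases_succ, Fin.lastCases_last]
  have hYz : ∀ ℓ : Fin k, Y ℓ.succ.castSucc = Z ℓ s0 := by
    intro ℓ
    show (Fin.cases s0 (fun j => Fin.lastCases (X s0) (fun ℓ => Z ℓ s0) j)
      ℓ.succ.castSucc : ℝ) = Z ℓ s0
    rw [← Fin.succ_castSucc, Fin.cases_succ, Fin.lastCases_castSucc]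
  refine ⟨Y, ?_, ?_⟩
  · -- existence : G Y w = 0
    refine PiLp.ext fun i => ?_
    show G k γ lam U h Y w i = (0:ℝ)
    induction i using Fin.cases with
    | zero =>
      rw [Gapp, Fin.cases_zero]
      simp only [hYz, hYlast, hY0, ← hv, ← hx]
      exact hs0
    | succ j =>
      rw [Gapp, Fin.cases_succ]
      induction j using Fin.lastCases with
      | last =>
        rw [Fin.lastCases_last]
        simp only [hYlast, hY0, ← hv, ← hx]
        linear_combination hXmul s0
      | cast ℓ =>
        rw [Fin.lastCases_castSucc]
        simp only [hYz, hYlast, hY0, ← hv, ← hx, hZ]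
        ring
  · -- uniqueness
    intro y hy
    have hcomp : ∀ i, G k γ lam U h y w i = 0 := fun i => by rw [hy]; rfl
    have elast := hcomp (Fin.last (k + 1))
    rw [Gapp_last, ← hv, ← hx] at elast
    have hylast : y (Fin.last (k + 1)) = X (y 0) := by
      apply mul_right_cancel₀ hD.ne'
      rw [hXmul]
      linear_combination elast
    have hyz : ∀ ℓ : Fin k, y ℓ.succ.castSucc = Z ℓ (y 0) := by
      intro ℓ
      have e := hcomp ℓ.succ.castSucc
      rw [Gapp_z, ← hv, ← hx, hylast] at e
      simp only [hZ]
      linear_combination e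
    have e0 := hcomp 0
    rw [Gapp, Fin.cases_zero] at e0
    simp only [← hv, ← hx, hylast, hyz] at e0
    have hφy : φ (y 0) = 0 := e0
    have hy0 : y 0 = s0 := hsu _ hφy
    refine PiLp.ext fun i => ?_
    induction i using Fin.cases with
    | zero => rw [hy0, hY0]
    | succ j =>
      induction j using Fin.lastCases with
      | last => rw [Fin.succ_last, hylast, hy0, hYlast]
      | cast ℓ => rw [Fin.succ_castSucc, hyz ℓ, hy0, hYz ℓ]
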